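/- The mean rotation number α depends strictly monotonically on the full energy F. Precisely: let 0 < R < 1, let z, g : ℝ/ℤ → ℝ be continuous with z(s) > 0 for all s, and let F₀ ∈ ℝ be such that F₀ − g(s) > ((1−R²)/R²) z(s)² for all s. For F ≥ F₀ define w_F(s) = √(F − g(s)), β_F(s) = arctan(z(s)/w_F(s)), and α(F) = 2∫_{ℝ/ℤ} (arcsin(sin β_F(s) / R) − β_F(s)) ds. Then α is strictly decreasing on [F₀, ∞). -/

import Mathlib

open Real Set MeasureTheory

/-- The function `β ↦ arcsin (sin β / R) - β` is strictly monotone on `[0, arcsin R]`. -/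
lemma aux_strictMonoOn (R : ℝ) (hR0 : 0 < R) (hR1 : R < 1) :
    StrictMonoOn (fun β : ℝ => Real.arcsin (Real.sin β / R) - β)
      (Set.Icc 0 (Real.arcsin R)) := by
  have hRmem : R ∈ Set.Icc (-1 : ℝ) 1 := ⟨by linarith, le_of_lt hR1⟩
  apply strictMonoOn_of_deriv_pos (convex_Icc _ _)
  · exact ((Real.continuous_arcsin.comp (Real.continuous_sin.div_const R)).sub
      continuous_id).continuousOn
  · intro β hβ
    rw [interior_Icc] at hβ
    obtain ⟨hβ0, hβR⟩ := hβ
    have harcR : Real.arcsin R ≤ π / 2 := Real.arcsin_le_pi_div_two R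
    have hβπ : β < π / 2 := lt_of_lt_of_le hβR harcR
    have hsβ0 : 0 < Real.sin β :=
      Real.sin_pos_of_pos_of_lt_pi hβ0 (by linarith [Real.pi_gt_three])
    have hcβ0 : 0 < Real.cos β := Real.cos_pos_of_mem_Ioo ⟨by linarith, hβπ⟩
    have hsβR : Real.sin β < R := by
      have := Real.strictMonoOn_sin (a := β) (b := Real.arcsin R)
        ⟨by linarith, le_of_lt hβπ⟩ ⟨Real.neg_pi_div_two_le_arcsin R, harcR⟩ hβR
      rwa [Real.sin_arcsin hRmem.1 hRmem.2] at this
    have hdiv1 : Real.sin β / R < 1 := (div_lt_one hR0).mpr hsβR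
    have hdiv0 : 0 < Real.sin β / R := div_pos hsβ0 hR0
    have h1 : Real.sin β / R ≠ -1 := by linarith
    have h2 : Real.sin β / R ≠ 1 := ne_of_lt hdiv1
    have hD : HasDerivAt (fun β : ℝ => Real.arcsin (Real.sin β / R) - β)
        (1 / Real.sqrt (1 - (Real.sin β / R) ^ 2) * (Real.cos β / R) - 1) β := by
      have := ((Real.hasDerivAt_arcsin h1 h2).comp β
        ((Real.hasDerivAt_sin β).div_const R)).sub (hasDerivAt_id β)
      exact this
    rw [hD.deriv]
    -- positivity of the derivative
    set A := Real.sqrt (1 - (Real.sin β / R) ^ 2) with hA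
    have hApos : 0 < A := Real.sqrt_pos.mpr (by nlinarith)
    have hAsq : A ^ 2 = 1 - (Real.sin β / R) ^ 2 :=
      Real.sq_sqrt (by nlinarith)
    have hRA : R * A < Real.cos β := by
      have hsq : (R * A) ^ 2 < Real.cos β ^ 2 := by
        have hpyth : Real.sin β ^ 2 + Real.cos β ^ 2 = 1 := Real.sin_sq_add_cos_sq β
        have hRA2 : (R * A) ^ 2 = R ^ 2 - Real.sin β ^ 2 := by
          rw [mul_pow, hAsq]
          field_simp
        nlinarith
      exact lt_of_pow_lt_pow_left₀ 2 (le_of_lt hcβ0) hsq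
    have : 1 < Real.cos β / (R * A) := (one_lt_div (by positivity)).mpr hRA
    have heq : 1 / A * (Real.cos β / R) = Real.cos β / (R * A) := by
      rw [div_mul_div_comm, one_mul, mul_comm A R]
    rw [heq]
    linarith

/-- The mean rotation number `α` depends strictly monotonically (decreasing)
on the full energy `F`. -/
theorem rotation_number_strict_anti (R : ℝ) (hR0 : 0 < R) (hR1 : R < 1)
    (z g : AddCircle (1 : ℝ) → ℝ) (hz : Continuous z) (hg : Continuous g)
    (hzpos : ∀ s, 0 < z s) (F₀ : ℝ)
    (hF₀ : ∀ s, ((1 - R ^ 2) / R ^ 2) * z s ^ 2 < F₀ - g s) :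
    StrictAntiOn (fun F : ℝ => 2 * ∫ s : AddCircle (1 : ℝ),
        (Real.arcsin (Real.sin (Real.arctan (z s / Real.sqrt (F - g s))) / R) -
          Real.arctan (z s / Real.sqrt (F - g s))))
      (Set.Ici F₀) := by
  have hR2 : 0 < 1 - R ^ 2 := by nlinarith
  -- For any F ≥ F₀, the energy term is positive
  have hpos : ∀ F, F₀ ≤ F → ∀ s, 0 < F - g s := by
    intro F hF s
    have h1 : 0 < ((1 - R ^ 2) / R ^ 2) * z s ^ 2 :=
      mul_pos (div_pos hR2 (by positivity)) (pow_pos (hzpos s) 2)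
    have := hF₀ s
    linarith
  -- β(F, s) := arctan (z s / √(F - g s)) lies in [0, arcsin R] (strictly inside)
  have hbeta_mem : ∀ F, F₀ ≤ F → ∀ s,
      Real.arctan (z s / Real.sqrt (F - g s)) ∈ Set.Icc 0 (Real.arcsin R) := by
    intro F hF s
    have hw : 0 < Real.sqrt (F - g s) := Real.sqrt_pos.mpr (hpos F hF s)
    set x := z s / Real.sqrt (F - g s) with hxdef
    have hx0 : 0 < x := div_pos (hzpos s) hw
    constructor
    · have h0 := Real.arctan_strictMono hx0
      rw [Real.arctan_zero] at h0
      exact le_of_lt h0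
    · -- show sin (arctan x) < R, then arctan x < arcsin R
      have hwsq : Real.sqrt (F - g s) ^ 2 = F - g s :=
        Real.sq_sqrt (le_of_lt (hpos F hF s))
      have hineq : (1 - R ^ 2) * x ^ 2 < R ^ 2 := by
        have h1 : ((1 - R ^ 2) / R ^ 2) * z s ^ 2 < F - g s :=
          lt_of_lt_of_le (hF₀ s) (by linarith [hF])
        have hx2 : x ^ 2 = z s ^ 2 / (F - g s) := by
          rw [hxdef, div_pow, hwsq]
        rw [hx2, ← mul_div_assoc, div_lt_iff₀ (hpos F hF s)]
        have hR2pos : (0:ℝ) < R ^ 2 := by positivity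
        rw [div_mul_eq_mul_div, div_lt_iff₀ hR2pos] at h1
        nlinarith
      have ht : Real.sqrt (1 + x ^ 2) > 0 := Real.sqrt_pos.mpr (by positivity)
      have htsq : Real.sqrt (1 + x ^ 2) ^ 2 = 1 + x ^ 2 :=
        Real.sq_sqrt (by positivity)
      have hsin : Real.sin (Real.arctan x) < R := by
        rw [Real.sin_arctan]
        rw [div_lt_iff₀ ht]
        have hsq : x ^ 2 < (R * Real.sqrt (1 + x ^ 2)) ^ 2 := by
          rw [mul_pow, htsq]; nlinarith
        exact lt_of_pow_lt_pow_left₀ 2 (by positivity) hsq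
      have hmem1 : Real.arctan x ∈ Set.Icc (-(π/2)) (π/2) := by
        constructor
        · linarith [Real.neg_pi_div_two_lt_arctan x]
        · linarith [Real.arctan_lt_pi_div_two x]
      have : Real.arctan x = Real.arcsin (Real.sin (Real.arctan x)) :=
        (Real.arcsin_sin hmem1.1 hmem1.2).symm
      rw [this]
      exact le_of_lt (Real.strictMonoOn_arcsin
        ⟨Real.neg_one_le_sin _, Real.sin_le_one _⟩ ⟨by linarith, le_of_lt hR1⟩ hsin)
  -- continuity of the integrand
  have hcont : ∀ F, F₀ ≤ F → Continuous (fun s : AddCircle (1:ℝ) =>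
      Real.arcsin (Real.sin (Real.arctan (z s / Real.sqrt (F - g s))) / R) -
        Real.arctan (z s / Real.sqrt (F - g s))) := by
    intro F hF
    have hX : Continuous (fun s : AddCircle (1:ℝ) => z s / Real.sqrt (F - g s)) := by
      apply hz.div ((continuous_const.sub hg).sqrt)
      intro s
      exact ne_of_gt (Real.sqrt_pos.mpr (hpos F hF s))
    exact (Real.continuous_arcsin.comp
      ((Real.continuous_sin.comp (Real.continuous_arctan.comp hX)).div_const R)).sub
      (Real.continuous_arctan.comp hX)
  -- integrability
  have hint : ∀ F, F₀ ≤ F → Integrable (fun s : AddCircle (1:ℝ) =>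
      Real.arcsin (Real.sin (Real.arctan (z s / Real.sqrt (F - g s))) / R) -
        Real.arctan (z s / Real.sqrt (F - g s))) := by
    intro F hF
    exact (hcont F hF).integrable_of_hasCompactSupport
      (IsCompact.of_isClosed_subset isCompact_univ (isClosed_closure) (Set.subset_univ _))
  intro F₁ hF₁ F₂ hF₂ hlt
  simp only [Set.mem_Ici] at hF₁ hF₂
  -- pointwise strict inequality
  have hpt : ∀ s : AddCircle (1:ℝ),
      (Real.arcsin (Real.sin (Real.arctan (z s / Real.sqrt (F₂ - g s))) / R) -
        Real.arctan (z s / Real.sqrt (F₂ - g s))) <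
      (Real.arcsin (Real.sin (Real.arctan (z s / Real.sqrt (F₁ - g s))) / R) -
        Real.arctan (z s / Real.sqrt (F₁ - g s))) := by
    intro s
    have hw1 : 0 < Real.sqrt (F₁ - g s) := Real.sqrt_pos.mpr (hpos F₁ hF₁ s)
    have hw12 : Real.sqrt (F₁ - g s) < Real.sqrt (F₂ - g s) := by
      apply Real.sqrt_lt_sqrt (le_of_lt (hpos F₁ hF₁ s))
      linarith
    have hx : z s / Real.sqrt (F₂ - g s) < z s / Real.sqrt (F₁ - g s) :=
      div_lt_div_of_pos_left (hzpos s) hw1 hw12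
    have hβ : Real.arctan (z s / Real.sqrt (F₂ - g s)) <
        Real.arctan (z s / Real.sqrt (F₁ - g s)) := Real.arctan_strictMono hx
    exact aux_strictMonoOn R hR0 hR1 (hbeta_mem F₂ hF₂ s) (hbeta_mem F₁ hF₁ s) hβ
  -- strict inequality of integrals
  have h2 : (0:ℝ) < 2 := by norm_num
  apply mul_lt_mul_of_pos_left _ h2
  -- define the difference
  set f₁ := fun s : AddCircle (1:ℝ) =>
      Real.arcsin (Real.sin (Real.arctan (z s / Real.sqrt (F₁ - g s))) / R) -
        Real.arctan (z s / Real.sqrt (F₁ - g s)) with hf₁def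
  set f₂ := fun s : AddCircle (1:ℝ) =>
      Real.arcsin (Real.sin (Real.arctan (z s / Real.sqrt (F₂ - g s))) / R) -
        Real.arctan (z s / Real.sqrt (F₂ - g s)) with hf₂def
  have hi₁ : Integrable f₁ := hint F₁ hF₁
  have hi₂ : Integrable f₂ := hint F₂ hF₂
  have hd : Continuous (fun s => f₁ s - f₂ s) := (hcont F₁ hF₁).sub (hcont F₂ hF₂)
  obtain ⟨s₀, _, hs₀⟩ := isCompact_univ.exists_isMinOn (Set.univ_nonempty)
    hd.continuousOn
  have hε : 0 < f₁ s₀ - f₂ s₀ := sub_pos.mpr (hpt s₀)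
  have hvol : (volume (Set.univ : Set (AddCircle (1:ℝ)))).toReal = 1 := by
    rw [AddCircle.measure_univ]
    simp
  have hle : (f₁ s₀ - f₂ s₀) ≤ ∫ s : AddCircle (1:ℝ), (f₁ s - f₂ s) := by
    have := MeasureTheory.integral_mono (integrable_const (f₁ s₀ - f₂ s₀))
      (hi₁.sub hi₂) (fun s => hs₀ (Set.mem_univ s))
    rwa [MeasureTheory.integral_const, measureReal_def, hvol, one_smul] at this
  have : 0 < ∫ s : AddCircle (1:ℝ), (f₁ s - f₂ s) := lt_of_lt_of_le hε hle
  rw [MeasureTheory.integral_sub hi₁ hi₂] at this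
  linarith
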